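/- For every integer i ≥ 0 and every real x with 0 < |x| < 1/2, the series Σ_{j≥0} D_∞(i,j)·x^j converges absolutely and equals x^i · C(x²)^{i+1}, where C(t) = (1 − √(1 − 4t))/(2t). -/

import Mathlib

/-- Number of lattice paths from `(0,0)` to `(j,i)` with steps `(1,1)` and `(1,-1)`
that never pass below the x-axis. -/
def dyckD : ℕ → ℕ → ℕ
  | i, 0 => if i = 0 then 1 else 0
  | i, j + 1 => (if 1 ≤ i then dyckD (i - 1) j else 0) + dyckD (i + 1) j

lemma dyckD_zero (i : ℕ) : dyckD i 0 = if i = 0 then 1 else 0 := rfl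

lemma dyckD_succ (i j : ℕ) :
    dyckD i (j + 1) = (if 1 ≤ i then dyckD (i - 1) j else 0) + dyckD (i + 1) j := rfl

lemma dyckD_le (j : ℕ) : ∀ i, dyckD i j ≤ 2 ^ j := by
  induction j with
  | zero => intro i; rw [dyckD_zero]; split <;> simp
  | succ j ih =>
    intro i
    rw [dyckD_succ, pow_succ, mul_two]
    gcongr ?_ + ?_
    · split
      · exact ih _
      · positivity
    · exact ih _

/-- Convolution identity. -/
lemma dyckD_conv : ∀ n a b : ℕ, dyckD (a + b + 1) (n + 1) =
    ∑ k ∈ Finset.range (n + 1), dyckD a k * dyckD b (n - k) := by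
  intro n
  induction n with
  | zero =>
    intro a b
    simp only [zero_add, Finset.sum_range_one, Nat.sub_zero]
    rw [dyckD_succ, dyckD_zero, dyckD_zero, dyckD_zero, dyckD_zero,
      if_pos (show 1 ≤ a + b + 1 by omega), if_neg (show ¬ (a + b + 1 + 1 = 0) by omega),
      show a + b + 1 - 1 = a + b from by omega]
    split_ifs <;> omega
  | succ n ih =>
    intro a b
    have key : ∑ k ∈ Finset.range (n + 2), dyckD a k * dyckD b (n + 1 - k)
        = (∑ k ∈ Finset.range (n + 1), dyckD a k *
            ((if 1 ≤ b then dyckD (b - 1) (n - k) else 0) + dyckD (b + 1) (n - k)))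
          + dyckD a (n + 1) * dyckD b 0 := by
      rw [Finset.sum_range_succ, Nat.sub_self]
      congr 1
      refine Finset.sum_congr rfl fun k hk => ?_
      have hk' : k ≤ n := by simpa [Nat.lt_succ_iff] using hk
      have : n + 1 - k = (n - k) + 1 := by omega
      rw [this, dyckD_succ]
    rw [key]
    simp only [mul_add, Finset.sum_add_distrib]
    rcases Nat.eq_zero_or_pos b with hb | hb
    · subst hb
      simp only [show ¬ (1 ≤ 0) by omega, if_false, mul_zero, Finset.sum_const_zero, zero_add]
      rw [← ih a 1, dyckD_zero, if_pos rfl, mul_one]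
      rw [dyckD_succ (a + 0 + 1) (n + 1)]
      simp only [Nat.add_zero]
      have h1 : 1 ≤ a + 1 := by omega
      rw [if_pos h1]
      have : a + 1 - 1 = a := by omega
      rw [this]
      omega
    · have hb1 : 1 ≤ b := hb
      simp only [if_pos hb1]
      rw [← ih a (b - 1), ← ih a (b + 1)]
      rw [dyckD_zero, if_neg (by omega), mul_zero, add_zero]
      rw [dyckD_succ (a + b + 1) (n + 1), if_pos (by omega)]
      have h1 : a + b + 1 - 1 = a + (b - 1) + 1 := by omega
      have h2 : a + b + 1 + 1 = a + (b + 1) + 1 := by omega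
      rw [h1, h2]

lemma dyckD_odd : ∀ j i : ℕ, (i + j) % 2 = 1 → dyckD i j = 0 := by
  intro j
  induction j with
  | zero => intro i h; rw [dyckD_zero, if_neg (by omega)]
  | succ j ih =>
    intro i h
    rw [dyckD_succ]
    have h2 : dyckD (i + 1) j = 0 := ih (i + 1) (by omega)
    rw [h2, add_zero]
    split
    · exact ih (i - 1) (by omega)
    · rfl

lemma sum_even_range {M : Type*} [AddCommMonoid M] (g : ℕ → M)
    (hg : ∀ k, k % 2 = 1 → g k = 0) : ∀ m,
    ∑ k ∈ Finset.range (2 * m + 1), g k = ∑ j ∈ Finset.range (m + 1), g (2 * j) := by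
  intro m
  induction m with
  | zero => simp
  | succ m ih =>
    have : 2 * (m + 1) + 1 = (2 * m + 1) + 1 + 1 := by ring
    rw [this, Finset.sum_range_succ, Finset.sum_range_succ, ih,
      hg (2 * m + 1) (by omega), add_zero,
      show 2 * m + 1 + 1 = 2 * (m + 1) from by omega]
    exact (Finset.sum_range_succ (fun j => g (2 * j)) (m + 1)).symm

lemma dyckD_zero_even : ∀ m : ℕ, dyckD 0 (2 * m) = catalan m := by
  intro m
  induction m using Nat.strong_induction_on with
  | _ m ih => ?_
  match m with
  | 0 => simp [dyckD_zero]
  | m + 1 =>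
    have h1 : 2 * (m + 1) = (2 * m + 1) + 1 := by ring
    rw [h1, dyckD_succ]
    simp only [show ¬ (1 ≤ 0) by omega, if_false, zero_add]
    have h2 : dyckD (0 + 0 + 1) (2 * m + 1) =
        ∑ k ∈ Finset.range (2 * m + 1), dyckD 0 k * dyckD 0 (2 * m - k) := dyckD_conv (2 * m) 0 0
    simp only [Nat.add_zero, Nat.zero_add] at h2
    rw [h2, sum_even_range _ (fun k hk => by
      rw [dyckD_odd k 0 (by omega), zero_mul])]
    rw [catalan_succ']
    rw [Finset.Nat.sum_antidiagonal_eq_sum_range_succ (fun a b => catalan a * catalan b)]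
    refine Finset.sum_congr rfl fun j hj => ?_
    have hj' : j ≤ m := by simpa [Nat.lt_succ_iff] using hj
    have e1 : dyckD 0 (2 * j) = catalan j := ih j (by omega)
    have e2 : 2 * m - 2 * j = 2 * (m - j) := by omega
    rw [e1, e2, ih (m - j) (by omega)]

lemma catalan_cb (m : ℕ) :
    2 * Nat.centralBinom (m + 1) + 4 * catalan m = 8 * Nat.centralBinom m := by
  apply Nat.eq_of_mul_eq_mul_left (show 0 < m + 1 by omega)
  have h1 := Nat.succ_mul_centralBinom_succ m
  have h2 := succ_mul_catalan_eq_centralBinom m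
  calc (m + 1) * (2 * Nat.centralBinom (m + 1) + 4 * catalan m)
      = 2 * ((m + 1) * Nat.centralBinom (m + 1)) + 4 * ((m + 1) * catalan m) := by ring
    _ = 2 * (2 * (2 * m + 1) * Nat.centralBinom m) + 4 * Nat.centralBinom m := by rw [h1, h2]
    _ = (m + 1) * (8 * Nat.centralBinom m) := by ring

lemma catalan_sum_le (N : ℕ) :
    ∑ m ∈ Finset.range N, (catalan m : ℝ) * (1 / 4) ^ m ≤ 2 := by
  have key : ∀ m : ℕ, (catalan m : ℝ) * (1 / 4) ^ m =
      2 * Nat.centralBinom m * (1 / 4) ^ m - 2 * Nat.centralBinom (m + 1) * (1 / 4) ^ (m + 1) := by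
    intro m
    have h := catalan_cb m
    have h' : (2 * Nat.centralBinom (m + 1) : ℝ) + 4 * catalan m = 8 * Nat.centralBinom m := by
      exact_mod_cast congrArg (Nat.cast : ℕ → ℝ) h
    rw [pow_succ]
    nlinarith [pow_pos (show (0:ℝ) < 1/4 by norm_num) m]
  calc ∑ m ∈ Finset.range N, (catalan m : ℝ) * (1 / 4) ^ m
      = ∑ m ∈ Finset.range N, ((fun m => 2 * (Nat.centralBinom m : ℝ) * (1 / 4) ^ m) m
          - (fun m => 2 * (Nat.centralBinom m : ℝ) * (1 / 4) ^ m) (m + 1)) := by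
        refine Finset.sum_congr rfl fun m _ => ?_
        simpa using key m
    _ = 2 * (Nat.centralBinom 0 : ℝ) * (1 / 4) ^ 0
          - 2 * (Nat.centralBinom N : ℝ) * (1 / 4) ^ N := Finset.sum_range_sub' _ N
    _ ≤ 2 := by
        simp only [Nat.centralBinom_zero, Nat.cast_one, pow_zero, mul_one]
        have : 0 ≤ 2 * (Nat.centralBinom N : ℝ) * (1 / 4) ^ N := by positivity
        linarith

theorem dyckD_generating_function (i : ℕ) (x : ℝ) (hx0 : 0 < |x|) (hx1 : |x| < 1 / 2) :
    Summable (fun j : ℕ => |(dyckD i j : ℝ) * x ^ j|) ∧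
    (∑' j : ℕ, (dyckD i j : ℝ) * x ^ j) =
      x ^ i * ((1 - Real.sqrt (1 - 4 * x ^ 2)) / (2 * x ^ 2)) ^ (i + 1) := by
  have hxne : x ≠ 0 := by intro h; rw [h] at hx0; simp at hx0
  have hx2 : x ^ 2 < 1 / 4 := by
    have := sq_abs x
    nlinarith [abs_nonneg x]
  have hx2pos : 0 < x ^ 2 := by positivity
  -- summability
  have habs : ∀ a : ℕ, Summable (fun j : ℕ => ‖(dyckD a j : ℝ) * x ^ j‖) := by
    intro a
    refine Summable.of_nonneg_of_le (fun j => norm_nonneg _) (fun j => ?_)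
      (summable_geometric_of_lt_one (r := 2 * |x|) (by positivity) (by linarith))
    rw [Real.norm_eq_abs, abs_mul, abs_pow, Nat.abs_cast, mul_pow]
    gcongr
    exact_mod_cast dyckD_le j a
  have hsumm : ∀ a : ℕ, Summable (fun j : ℕ => (dyckD a j : ℝ) * x ^ j) :=
    fun a => (habs a).of_norm
  set F : ℕ → ℝ := fun a => ∑' j : ℕ, (dyckD a j : ℝ) * x ^ j with hF
  -- Cauchy product
  have hmul : ∀ a b : ℕ, x * (F a * F b) = F (a + b + 1) := by
    intro a b
    have hc : F a * F b = ∑' n : ℕ, (dyckD (a + b + 1) (n + 1) : ℝ) * x ^ n := by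
      rw [hF]
      rw [tsum_mul_tsum_eq_tsum_sum_range_of_summable_norm (habs a) (habs b)]
      refine tsum_congr fun n => ?_
      rw [dyckD_conv n a b]
      push_cast
      rw [Finset.sum_mul]
      refine Finset.sum_congr rfl fun k hk => ?_
      have hk' : k ≤ n := by simpa [Nat.lt_succ_iff] using hk
      have : x ^ k * x ^ (n - k) = x ^ n := by
        rw [← pow_add]; congr 1; omega
      rw [← this]
      ring
    have hshift : F (a + b + 1) = (dyckD (a + b + 1) 0 : ℝ) * x ^ 0
        + ∑' n : ℕ, (dyckD (a + b + 1) (n + 1) : ℝ) * x ^ (n + 1) := by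
      rw [hF]
      exact Summable.tsum_eq_zero_add (hsumm (a + b + 1))
    rw [hc, hshift, dyckD_zero, if_neg (by omega)]
    push_cast
    rw [zero_mul, zero_add, ← tsum_mul_left]
    refine (tsum_congr fun n => ?_).symm
    rw [pow_succ]
    ring
  -- F a = x^a * (F 0)^(a+1)
  have hFi : ∀ a : ℕ, F a = x ^ a * (F 0) ^ (a + 1) := by
    intro a
    induction a with
    | zero => simp
    | succ a ih =>
      have := hmul 0 a
      simp only [Nat.zero_add] at this
      rw [← this, ih]
      ring
  -- functional equation F 0 = 1 + x^2 * (F 0)^2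
  have hfe : F 0 = 1 + x ^ 2 * (F 0) ^ 2 := by
    have h1 : x * (F 0 * F 0) = F 1 := by simpa using hmul 0 0
    have h2 : F 0 = 1 + x * F 1 := by
      have h0 : F 0 = (dyckD 0 0 : ℝ) * x ^ 0 + ∑' n : ℕ, (dyckD 0 (n + 1) : ℝ) * x ^ (n + 1) :=
        Summable.tsum_eq_zero_add (hsumm 0)
      have h3 : ∑' n : ℕ, (dyckD 0 (n + 1) : ℝ) * x ^ (n + 1) = x * F 1 := by
        rw [show F 1 = ∑' n : ℕ, (dyckD 1 n : ℝ) * x ^ n from rfl, ← tsum_mul_left]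
        refine tsum_congr fun n => ?_
        rw [show dyckD 0 (n + 1) = dyckD 1 n from by rw [dyckD_succ]; simp, pow_succ]
        ring
      rw [h0, h3, dyckD_zero, if_pos rfl]
      norm_num
    calc F 0 = 1 + x * F 1 := h2
      _ = 1 + x * (x * (F 0 * F 0)) := by rw [h1]
      _ = 1 + x ^ 2 * F 0 ^ 2 := by ring
  -- nonnegativity of terms of F 0
  have hterm_nonneg : ∀ j : ℕ, 0 ≤ (dyckD 0 j : ℝ) * x ^ j := by
    intro j
    rcases Nat.even_or_odd j with ⟨m, hm⟩ | ⟨m, hm⟩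
    · subst hm
      have : x ^ (m + m) = (x ^ m) ^ 2 := by rw [← pow_mul]; ring_nf
      rw [this]
      positivity
    · subst hm
      rw [dyckD_odd (2 * m + 1) 0 (by omega)]
      simp
  -- F 0 ≤ 2
  have hF0le : F 0 ≤ 2 := by
    rw [hF]
    apply Real.tsum_le_of_sum_range_le hterm_nonneg
    intro N
    have step1 : ∑ j ∈ Finset.range N, (dyckD 0 j : ℝ) * x ^ j
        ≤ ∑ j ∈ Finset.range (2 * N + 1), (dyckD 0 j : ℝ) * x ^ j := by
      apply Finset.sum_le_sum_of_subset_of_nonneg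
      · apply Finset.range_subset_range.2; omega
      · intro j _ _; exact hterm_nonneg j
    have step2 : ∑ j ∈ Finset.range (2 * N + 1), (dyckD 0 j : ℝ) * x ^ j
        = ∑ m ∈ Finset.range (N + 1), (catalan m : ℝ) * (x ^ 2) ^ m := by
      rw [sum_even_range (fun j => (dyckD 0 j : ℝ) * x ^ j)
        (fun k hk => by simp [dyckD_odd k 0 (by omega)]) N]
      refine Finset.sum_congr rfl fun m _ => ?_
      rw [dyckD_zero_even m, ← pow_mul, mul_comm 2 m, pow_mul]
    have step3 : ∑ m ∈ Finset.range (N + 1), (catalan m : ℝ) * (x ^ 2) ^ m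
        ≤ ∑ m ∈ Finset.range (N + 1), (catalan m : ℝ) * (1 / 4) ^ m := by
      apply Finset.sum_le_sum
      intro m _
      have hx2' : x ^ 2 ≤ 1 / 4 := le_of_lt hx2
      gcongr
    calc ∑ j ∈ Finset.range N, (dyckD 0 j : ℝ) * x ^ j
        ≤ ∑ j ∈ Finset.range (2 * N + 1), (dyckD 0 j : ℝ) * x ^ j := step1
      _ = ∑ m ∈ Finset.range (N + 1), (catalan m : ℝ) * (x ^ 2) ^ m := step2
      _ ≤ ∑ m ∈ Finset.range (N + 1), (catalan m : ℝ) * (1 / 4) ^ m := step3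
      _ ≤ 2 := catalan_sum_le (N + 1)
  have hF0nonneg : 0 ≤ F 0 := tsum_nonneg hterm_nonneg
  -- solve for F 0
  have hsq : (1 - 2 * x ^ 2 * F 0) ^ 2 = 1 - 4 * x ^ 2 := by nlinarith [hfe]
  have hpos : 0 ≤ 1 - 2 * x ^ 2 * F 0 := by nlinarith
  have hsqrt : Real.sqrt (1 - 4 * x ^ 2) = 1 - 2 * x ^ 2 * F 0 := by
    rw [← hsq, Real.sqrt_sq hpos]
  have hF0eq : F 0 = (1 - Real.sqrt (1 - 4 * x ^ 2)) / (2 * x ^ 2) := by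
    rw [hsqrt]
    field_simp
    ring
  refine ⟨by simpa only [Real.norm_eq_abs] using habs i, ?_⟩
  rw [show (∑' j : ℕ, (dyckD i j : ℝ) * x ^ j) = F i from rfl, hFi i, hF0eq]
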